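/- Let G be an n-by-n block matrix with blocks G_{k,l} \in Matrix (Fin p) (Fin p) ℂ for 0 \le k, l < n, and suppose that for every m with 1 \le m \le n the leading principal block truncation G_{[m]} = (G_{k,l})_{0 \le k,l < m} is invertible (as an mp-by-mp matrix). Then there exist unique block lower unitriangular matrices S_1, S_2 (i.e., block lower triangular with identity diagonal blocks) and a unique block diagonal matrix H = diag(H_0, ..., H_{n-1}) with each H_k invertible such that G = S_1^{-1} * H * (S_2^{-1})^{⊤_b}, where ⊤_b denotes blockwise transpose (transposing the block pattern and each block). -/
import Mathlib

open Matrix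

namespace GaussBorel

variable {n p : ℕ}

abbrev Mat (n p : ℕ) := Matrix (Fin n × Fin p) (Fin n × Fin p) ℂ

def IsBL (M : Mat n p) : Prop :=
  ∀ k l : Fin n, (k : ℕ) < (l : ℕ) → ∀ i j : Fin p, M (k, i) (l, j) = 0

def IsUD (M : Mat n p) : Prop :=
  ∀ (k : Fin n) (i j : Fin p), M (k, i) (k, j) = if i = j then 1 else 0

lemma isBL_iff {M : Mat n p} :
    IsBL M ↔ BlockTriangular M (fun x : Fin n × Fin p => OrderDual.toDual x.1) := by
  constructor
  · intro h x y hxy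
    exact h x.1 y.1 hxy x.2 y.2
  · intro h k l hkl i j
    exact h (i := (k, i)) (j := (l, j)) hkl

lemma det_eq_one {M : Mat n p} (hb : IsBL M) (hu : IsUD M) : M.det = 1 := by
  rw [(isBL_iff.mp hb).det]
  apply Finset.prod_eq_one
  intro a _
  have : M.toSquareBlock (fun x : Fin n × Fin p => OrderDual.toDual x.1) a = 1 := by
    ext x y
    obtain ⟨⟨k, i⟩, hk⟩ := x
    obtain ⟨⟨l, j⟩, hl⟩ := y
    have hkl : k = l := by
      have := hk.trans hl.symm
      exact OrderDual.toDual_inj.mp this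
    subst hkl
    have h1 : (M.toSquareBlock (fun x : Fin n × Fin p => OrderDual.toDual x.1) a)
        ⟨(k, i), hk⟩ ⟨(k, j), hl⟩ = M (k, i) (k, j) := rfl
    rw [h1, hu k i j, Matrix.one_apply]
    by_cases h : i = j
    · simp [h]
    · simp [h, Subtype.ext_iff, Prod.ext_iff]
  rw [this, det_one]

lemma isUnit_of_lu {M : Mat n p} (hb : IsBL M) (hu : IsUD M) : IsUnit M := by
  rw [Matrix.isUnit_iff_isUnit_det, det_eq_one hb hu]
  exact isUnit_one

lemma IsBL.mul {M N : Mat n p} (hM : IsBL M) (hN : IsBL N) : IsBL (M * N) :=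
  isBL_iff.mpr ((isBL_iff.mp hM).mul (isBL_iff.mp hN))

lemma IsUD.mul {M N : Mat n p} (hMb : IsBL M) (hM : IsUD M) (hNb : IsBL N) (hN : IsUD N) :
    IsUD (M * N) := by
  intro k i j
  rw [Matrix.mul_apply, Fintype.sum_prod_type, Finset.sum_eq_single k]
  · simp [hM k i, hN k]
  · intro m _ hm
    apply Finset.sum_eq_zero
    intro t _
    rcases hm.lt_or_gt with h | h
    · rw [hNb m k h t j, mul_zero]
    · rw [hMb k m h i t, zero_mul]
  · intro h; exact absurd (Finset.mem_univ k) h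

lemma inv_lu {M : Mat n p} (hb : IsBL M) (hu : IsUD M) : IsBL M⁻¹ ∧ IsUD M⁻¹ := by
  have hdet : IsUnit M.det := by rw [det_eq_one hb hu]; exact isUnit_one
  haveI : Invertible M := M.invertibleOfIsUnitDet hdet
  have hbi : IsBL M⁻¹ := isBL_iff.mpr (blockTriangular_inv_of_blockTriangular (isBL_iff.mp hb))
  refine ⟨hbi, ?_⟩
  intro k i j
  have h1 : (M * M⁻¹) (k, i) (k, j) = if i = j then 1 else 0 := by
    rw [Matrix.mul_nonsing_inv M hdet, Matrix.one_apply]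
    simp [Prod.ext_iff]
  rw [Matrix.mul_apply, Fintype.sum_prod_type, Finset.sum_eq_single k] at h1
  · rw [← h1]
    simp [hu k i]
  · intro m _ hm
    apply Finset.sum_eq_zero
    intro t _
    rcases hm.lt_or_gt with h | h
    · rw [hbi m k h t j, mul_zero]
    · rw [hb k m h i t, zero_mul]
  · intro h; exact absurd (Finset.mem_univ k) h

def IsBD (H : Mat n p) : Prop :=
  ∀ k l : Fin n, k ≠ l → ∀ i j : Fin p, H (k, i) (l, j) = 0

lemma mul_bd_apply {A H : Mat n p} (hH : IsBD H) (k l : Fin n) (i j : Fin p) :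
    (A * H) (k, i) (l, j) = ∑ t, A (k, i) (l, t) * H (l, t) (l, j) := by
  rw [Matrix.mul_apply, Fintype.sum_prod_type, Finset.sum_eq_single l]
  · intro m _ hm
    apply Finset.sum_eq_zero
    intro t _
    rw [hH m l hm t j, mul_zero]
  · intro h; exact absurd (Finset.mem_univ l) h

lemma bd_mul_apply {K B : Mat n p} (hK : IsBD K) (k l : Fin n) (i j : Fin p) :
    (K * B) (k, i) (l, j) = ∑ t, K (k, i) (k, t) * B (k, t) (l, j) := by
  rw [Matrix.mul_apply, Fintype.sum_prod_type, Finset.sum_eq_single k]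
  · intro m _ hm
    apply Finset.sum_eq_zero
    intro t _
    rw [hK k m hm.symm i t, zero_mul]
  · intro h; exact absurd (Finset.mem_univ k) h

/-- Uniqueness part of the factorization. -/
lemma uniqueness {S₁ S₂ H T₁ T₂ K G : Mat n p}
    (hS₁b : IsBL S₁) (hS₁u : IsUD S₁) (hS₂b : IsBL S₂) (hS₂u : IsUD S₂)
    (hHd : IsBD H) (hHu : ∀ k : Fin n, IsUnit (Matrix.of fun i j : Fin p => H (k, i) (k, j)))
    (hT₁b : IsBL T₁) (hT₁u : IsUD T₁) (hT₂b : IsBL T₂) (hT₂u : IsUD T₂)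
    (hKd : IsBD K) (hKu : ∀ k : Fin n, IsUnit (Matrix.of fun i j : Fin p => K (k, i) (k, j)))
    (hG1 : G = S₁⁻¹ * H * (S₂⁻¹)ᵀ) (hG2 : G = T₁⁻¹ * K * (T₂⁻¹)ᵀ) :
    S₁ = T₁ ∧ S₂ = T₂ ∧ H = K := by
  have hdS₁ : IsUnit S₁.det := by rw [det_eq_one hS₁b hS₁u]; exact isUnit_one
  have hdS₂ : IsUnit S₂.det := by rw [det_eq_one hS₂b hS₂u]; exact isUnit_one
  have hdT₁ : IsUnit T₁.det := by rw [det_eq_one hT₁b hT₁u]; exact isUnit_one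
  have hdT₂ : IsUnit T₂.det := by rw [det_eq_one hT₂b hT₂u]; exact isUnit_one
  set A := T₁ * S₁⁻¹ with hA
  set Bm := S₂ * T₂⁻¹ with hBm
  obtain ⟨hS₁ib, hS₁iu⟩ := inv_lu hS₁b hS₁u
  obtain ⟨hT₂ib, hT₂iu⟩ := inv_lu hT₂b hT₂u
  have hAb : IsBL A := IsBL.mul hT₁b hS₁ib
  have hAu : IsUD A := IsUD.mul hT₁b hT₁u hS₁ib hS₁iu
  have hBb : IsBL Bm := IsBL.mul hS₂b hT₂ib
  have hBu : IsUD Bm := IsUD.mul hS₂b hS₂u hT₂ib hT₂iu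
  have key : A * H = K * Bmᵀ := by
    have e1 : (S₂⁻¹)ᵀ * S₂ᵀ = 1 := by
      rw [← Matrix.transpose_mul, Matrix.mul_nonsing_inv _ hdS₂, Matrix.transpose_one]
    have e2 : T₁ * T₁⁻¹ = 1 := Matrix.mul_nonsing_inv _ hdT₁
    have hcent : S₁⁻¹ * H * (S₂⁻¹)ᵀ = T₁⁻¹ * K * (T₂⁻¹)ᵀ := by rw [← hG1, hG2]
    calc T₁ * S₁⁻¹ * H = T₁ * S₁⁻¹ * H * ((S₂⁻¹)ᵀ * S₂ᵀ) := by rw [e1, Matrix.mul_one]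
      _ = T₁ * (S₁⁻¹ * H * (S₂⁻¹)ᵀ) * S₂ᵀ := by simp only [Matrix.mul_assoc]
      _ = T₁ * (T₁⁻¹ * K * (T₂⁻¹)ᵀ) * S₂ᵀ := by rw [hcent]
      _ = (T₁ * T₁⁻¹) * (K * ((T₂⁻¹)ᵀ * S₂ᵀ)) := by simp only [Matrix.mul_assoc]
      _ = K * Bmᵀ := by rw [e2, Matrix.one_mul, hBm, Matrix.transpose_mul]
  -- entrywise consequences
  have hHK : H = K := by
    ext ⟨k, i⟩ ⟨l, j⟩
    by_cases hkl : k = l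
    · subst hkl
      have h1 := congrFun (congrFun key (k, i)) (k, j)
      rw [mul_bd_apply hHd, bd_mul_apply hKd] at h1
      simp only [hAu k i, Matrix.transpose_apply, hBu k] at h1
      simpa using h1
    · rw [hHd k l hkl, hKd k l hkl]
  have hAone : A = 1 := by
    ext ⟨k, i⟩ ⟨l, j⟩
    rcases lt_trichotomy (k : ℕ) (l : ℕ) with h | h | h
    · rw [hAb k l h i j, Matrix.one_apply_ne]
      intro hc
      rw [Prod.ext_iff] at hc
      exact absurd (congrArg Fin.val hc.1) h.ne
    · have hkl : k = l := Fin.ext h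
      subst hkl
      rw [hAu k i j, Matrix.one_apply]
      simp [Prod.ext_iff]
    · -- l < k : show block (k,l) of A vanishes
      have hz : (Matrix.of fun i t : Fin p => A (k, i) (l, t)) *
          (Matrix.of fun t j : Fin p => H (l, t) (l, j)) = 0 := by
        ext i' j'
        have h1 := congrFun (congrFun key (k, i')) (l, j')
        rw [mul_bd_apply hHd, bd_mul_apply hKd] at h1
        have h2 : ∀ t : Fin p, K (k, i') (k, t) * Bmᵀ (k, t) (l, j') = 0 := by
          intro t
          rw [Matrix.transpose_apply, hBb l k h j' t, mul_zero]
        rw [Finset.sum_congr rfl fun t _ => h2 t, Finset.sum_const_zero] at h1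
        simpa [Matrix.mul_apply] using h1
      have hHul := hHu l
      have hdH : IsUnit (Matrix.of fun t j : Fin p => H (l, t) (l, j)).det :=
        (Matrix.isUnit_iff_isUnit_det _).mp hHul
      have : (Matrix.of fun i t : Fin p => A (k, i) (l, t)) = 0 := by
        calc (Matrix.of fun i t : Fin p => A (k, i) (l, t))
            = (Matrix.of fun i t : Fin p => A (k, i) (l, t)) *
              ((Matrix.of fun t j : Fin p => H (l, t) (l, j)) *
               (Matrix.of fun t j : Fin p => H (l, t) (l, j))⁻¹) := by
              rw [Matrix.mul_nonsing_inv _ hdH, Matrix.mul_one]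
          _ = 0 := by rw [← Matrix.mul_assoc, hz, Matrix.zero_mul]
      have := congrFun (congrFun this i) j
      rw [Matrix.one_apply_ne]
      · exact this
      · intro hc
        rw [Prod.ext_iff] at hc
        exact absurd (congrArg Fin.val hc.1) h.ne'
  have hBone : Bm = 1 := by
    ext ⟨l, j⟩ ⟨k, i⟩
    rcases lt_trichotomy (k : ℕ) (l : ℕ) with h | h | h
    · -- k < l : below-diagonal entries of Bm; use key at ((k,i),(l,j))
      have hz : (Matrix.of fun i t : Fin p => K (k, i) (k, t)) *
          (Matrix.of fun t j : Fin p => Bm (l, j) (k, t)) = 0 := by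
        ext i' j'
        have h1 := congrFun (congrFun key (k, i')) (l, j')
        rw [mul_bd_apply hHd, bd_mul_apply hKd] at h1
        have h2 : ∀ t : Fin p, A (k, i') (l, t) * H (l, t) (l, j') = 0 := by
          intro t
          rw [hAb k l h i' t, zero_mul]
        rw [Finset.sum_congr rfl fun t _ => h2 t, Finset.sum_const_zero] at h1
        simp only [Matrix.transpose_apply] at h1
        simpa [Matrix.mul_apply] using h1.symm
      have hdK : IsUnit (Matrix.of fun i t : Fin p => K (k, i) (k, t)).det :=
        (Matrix.isUnit_iff_isUnit_det _).mp (hKu k)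
      have h3 : (Matrix.of fun t j : Fin p => Bm (l, j) (k, t)) = 0 := by
        calc (Matrix.of fun t j : Fin p => Bm (l, j) (k, t))
            = ((Matrix.of fun i t : Fin p => K (k, i) (k, t))⁻¹ *
               (Matrix.of fun i t : Fin p => K (k, i) (k, t))) *
              (Matrix.of fun t j : Fin p => Bm (l, j) (k, t)) := by
              rw [Matrix.nonsing_inv_mul _ hdK, Matrix.one_mul]
          _ = 0 := by rw [Matrix.mul_assoc, hz, Matrix.mul_zero]
      have := congrFun (congrFun h3 i) j
      rw [Matrix.one_apply_ne]
      · exact this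
      · intro hc
        rw [Prod.ext_iff] at hc
        exact absurd (congrArg Fin.val hc.1) h.ne'
    · have hkl : k = l := Fin.ext h
      subst hkl
      rw [hBu k j i, Matrix.one_apply]
      simp [Prod.ext_iff]
    · rw [hBb l k h j i, Matrix.one_apply_ne]
      intro hc
      rw [Prod.ext_iff] at hc
      exact absurd (congrArg Fin.val hc.1) h.ne
  refine ⟨?_, ?_, hHK⟩
  · -- T₁ * S₁⁻¹ = 1 → S₁ = T₁
    have : T₁ = S₁ := by
      calc T₁ = T₁ * (S₁⁻¹ * S₁) := by rw [Matrix.nonsing_inv_mul _ hdS₁, Matrix.mul_one]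
        _ = (T₁ * S₁⁻¹) * S₁ := by rw [Matrix.mul_assoc]
        _ = S₁ := by rw [← hA, hAone, Matrix.one_mul]
    exact this.symm
  · have hc1 : S₂ = S₂ * (T₂⁻¹ * T₂) := by
      rw [Matrix.nonsing_inv_mul _ hdT₂, Matrix.mul_one]
    calc S₂ = S₂ * (T₂⁻¹ * T₂) := hc1
      _ = Bm * T₂ := by rw [← Matrix.mul_assoc, ← hBm]
      _ = T₂ := by rw [hBone, Matrix.one_mul]

/-- The reindexing equivalence splitting off the last block. -/
def blockEquiv (n p : ℕ) : (Fin n × Fin p) ⊕ Fin p ≃ Fin (n + 1) × Fin p where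
  toFun := Sum.elim (fun a => (a.1.castSucc, a.2)) fun i => (Fin.last n, i)
  invFun x := if h : x.1 = Fin.last n then Sum.inr x.2 else Sum.inl (x.1.castPred h, x.2)
  left_inv := by
    have hne : ∀ k : Fin n, k.castSucc ≠ Fin.last n := fun k => (Fin.castSucc_lt_last k).ne
    rintro (⟨k, i⟩ | i) <;> simp [hne, Fin.castPred_castSucc]
  right_inv := by
    rintro ⟨k, i⟩
    by_cases h : k = Fin.last n
    · simp [h]
    · simp [h, Fin.castSucc_castPred]

lemma exists_lu {p : ℕ} : ∀ (n : ℕ) (G : Mat n p),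
    (∀ (m : ℕ) (hm : m ≤ n), 0 < m →
      IsUnit (Matrix.of fun a b : Fin m × Fin p =>
        G (Fin.castLE hm a.1, a.2) (Fin.castLE hm b.1, b.2))) →
    ∃ L M H : Mat n p, IsBL L ∧ IsUD L ∧ IsBL M ∧ IsUD M ∧ IsBD H ∧
      (∀ k : Fin n, IsUnit (Matrix.of fun i j : Fin p => H (k, i) (k, j))) ∧
      G = L * H * Mᵀ := by
  intro n
  induction n with
  | zero =>
    intro G _
    refine ⟨1, 1, 1, fun k => k.elim0, fun k => k.elim0, fun k => k.elim0, fun k => k.elim0,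
      fun k => k.elim0, fun k => k.elim0, ?_⟩
    ext ⟨k, i⟩
    exact k.elim0
  | succ n ih =>
    intro G hG
    have hne : ∀ k : Fin n, k.castSucc ≠ Fin.last n := fun k => (Fin.castSucc_lt_last k).ne
    set A : Mat n p :=
      Matrix.of (fun a b : Fin n × Fin p => G (a.1.castSucc, a.2) (b.1.castSucc, b.2)) with hAdef
    set B : Matrix (Fin n × Fin p) (Fin p) ℂ :=
      Matrix.of (fun a i => G (a.1.castSucc, a.2) (Fin.last n, i)) with hBdef
    set C : Matrix (Fin p) (Fin n × Fin p) ℂ :=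
      Matrix.of (fun i a => G (Fin.last n, i) (a.1.castSucc, a.2)) with hCdef
    set D : Matrix (Fin p) (Fin p) ℂ :=
      Matrix.of (fun i j => G (Fin.last n, i) (Fin.last n, j)) with hDdef
    obtain ⟨L₀, M₀, H₀, hL₀b, hL₀u, hM₀b, hM₀u, hH₀d, hH₀u, hfac⟩ :=
      ih A (fun m hm h0 => hG m (hm.trans (Nat.le_succ n)) h0)
    have hAu : IsUnit A := by
      rcases Nat.eq_zero_or_pos n with h0 | h0
      · exact (Matrix.isUnit_iff_isUnit_det A).mpr
          (by subst h0; rw [Matrix.det_isEmpty]; exact isUnit_one)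
      · exact hG n (Nat.le_succ n) h0
    have hdA : IsUnit A.det := (Matrix.isUnit_iff_isUnit_det A).mp hAu
    have hGu : IsUnit G := hG (n + 1) le_rfl n.succ_pos
    have hdG : IsUnit G.det := (Matrix.isUnit_iff_isUnit_det G).mp hGu
    set S : Matrix (Fin p) (Fin p) ℂ := D - C * A⁻¹ * B with hSdef
    set X : Matrix (Fin p) (Fin n × Fin p) ℂ := C * A⁻¹ * L₀ with hXdef
    set W : Matrix (Fin p) (Fin n × Fin p) ℂ := ((L₀ * H₀)⁻¹ * B)ᵀ with hWdef
    set e := blockEquiv n p with hedef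
    have hsub : G.submatrix e e = Matrix.fromBlocks A B C D := by
      ext x y
      rcases x with a | i <;> rcases y with b | j <;> rfl
    haveI : Invertible A := A.invertibleOfIsUnitDet hdA
    have hdetblocks : G.det = A.det * S.det := by
      rw [← Matrix.det_submatrix_equiv_self e G, hsub, Matrix.det_fromBlocks₁₁,
        Matrix.invOf_eq_nonsing_inv]
    have hdS : IsUnit S.det := by
      rw [hdetblocks] at hdG
      exact isUnit_of_mul_isUnit_right hdG
    have hSu : IsUnit S := (Matrix.isUnit_iff_isUnit_det S).mpr hdS
    have hdLH : IsUnit (L₀ * H₀).det := by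
      have h5 : A.det = (L₀ * H₀).det := by
        rw [hfac, Matrix.det_mul, Matrix.det_transpose, det_eq_one hM₀b hM₀u, mul_one]
      exact h5 ▸ hdA
    -- the three new matrices
    set newL : Mat (n + 1) p := Matrix.of (fun x y : Fin (n + 1) × Fin p =>
      if hx : x.1 = Fin.last n then
        (if hy : y.1 = Fin.last n then (if x.2 = y.2 then (1 : ℂ) else 0)
         else X x.2 (y.1.castPred hy, y.2))
      else
        (if hy : y.1 = Fin.last n then 0
         else L₀ (x.1.castPred hx, x.2) (y.1.castPred hy, y.2))) with hnLdef
    set newM : Mat (n + 1) p := Matrix.of (fun x y : Fin (n + 1) × Fin p =>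
      if hx : x.1 = Fin.last n then
        (if hy : y.1 = Fin.last n then (if x.2 = y.2 then (1 : ℂ) else 0)
         else W x.2 (y.1.castPred hy, y.2))
      else
        (if hy : y.1 = Fin.last n then 0
         else M₀ (x.1.castPred hx, x.2) (y.1.castPred hy, y.2))) with hnMdef
    set newH : Mat (n + 1) p := Matrix.of (fun x y : Fin (n + 1) × Fin p =>
      if hx : x.1 = Fin.last n then
        (if hy : y.1 = Fin.last n then S x.2 y.2 else 0)
      else
        (if hy : y.1 = Fin.last n then 0
         else H₀ (x.1.castPred hx, x.2) (y.1.castPred hy, y.2))) with hnHdef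
    have hLsub : newL.submatrix e e = Matrix.fromBlocks L₀ 0 X 1 := by
      ext x y
      rcases x with ⟨a, ia⟩ | i <;> rcases y with ⟨b, jb⟩ | j <;>
        simp [hnLdef, hedef, blockEquiv, hne, Fin.castPred_castSucc, Matrix.one_apply]
    have hMsub : newM.submatrix e e = Matrix.fromBlocks M₀ 0 W 1 := by
      ext x y
      rcases x with ⟨a, ia⟩ | i <;> rcases y with ⟨b, jb⟩ | j <;>
        simp [hnMdef, hedef, blockEquiv, hne, Fin.castPred_castSucc, Matrix.one_apply]
    have hHsub : newH.submatrix e e = Matrix.fromBlocks H₀ 0 0 S := by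
      ext x y
      rcases x with ⟨a, ia⟩ | i <;> rcases y with ⟨b, jb⟩ | j <;>
        simp [hnHdef, hedef, blockEquiv, hne, Fin.castPred_castSucc]
    -- block algebra
    have eq2 : L₀ * H₀ * Wᵀ = B := by
      rw [hWdef, Matrix.transpose_transpose, ← Matrix.mul_assoc,
        Matrix.mul_nonsing_inv _ hdLH, Matrix.one_mul]
    have eq3 : X * H₀ * M₀ᵀ = C := by
      rw [hXdef]
      calc C * A⁻¹ * L₀ * H₀ * M₀ᵀ = C * (A⁻¹ * (L₀ * H₀ * M₀ᵀ)) := by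
            simp only [Matrix.mul_assoc]
        _ = C * (A⁻¹ * A) := by rw [← hfac]
        _ = C := by rw [Matrix.nonsing_inv_mul _ hdA, Matrix.mul_one]
    have eq4 : X * H₀ * Wᵀ = C * A⁻¹ * B := by
      rw [hXdef, hWdef, Matrix.transpose_transpose]
      calc C * A⁻¹ * L₀ * H₀ * ((L₀ * H₀)⁻¹ * B)
          = C * A⁻¹ * ((L₀ * H₀) * (L₀ * H₀)⁻¹) * B := by simp only [Matrix.mul_assoc]
        _ = C * A⁻¹ * B := by rw [Matrix.mul_nonsing_inv _ hdLH, Matrix.mul_one]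
    have eq4' : X * H₀ * Wᵀ + S = D := by
      rw [eq4, hSdef]
      abel
    have m1 : Matrix.fromBlocks L₀ 0 X 1 * Matrix.fromBlocks H₀ 0 0 S =
        Matrix.fromBlocks (L₀ * H₀) 0 (X * H₀) S := by
      simp [Matrix.fromBlocks_multiply]
    have m2 : Matrix.fromBlocks (L₀ * H₀) 0 (X * H₀) S * Matrix.fromBlocks M₀ᵀ Wᵀ 0 1 =
        Matrix.fromBlocks (L₀ * H₀ * M₀ᵀ) (L₀ * H₀ * Wᵀ) (X * H₀ * M₀ᵀ) (X * H₀ * Wᵀ + S) := by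
      simp [Matrix.fromBlocks_multiply]
    -- the factorization identity
    have key : (newL * newH * newMᵀ).submatrix e e = G.submatrix e e := by
      rw [← Matrix.submatrix_mul_equiv (newL * newH) newMᵀ e e e,
        ← Matrix.submatrix_mul_equiv newL newH e e e, hLsub, hHsub,
        ← Matrix.transpose_submatrix, hMsub, Matrix.fromBlocks_transpose,
        Matrix.transpose_zero, Matrix.transpose_one, m1, m2, hsub, eq2, eq3, eq4', ← hfac]
    have hGfac : G = newL * newH * newMᵀ := by
      have h6 := congrArg (fun N : Matrix _ _ ℂ => N.submatrix ⇑e.symm ⇑e.symm) key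
      simp only [Matrix.submatrix_submatrix, Equiv.self_comp_symm,
        Matrix.submatrix_id_id] at h6
      exact h6.symm
    -- structural properties of the new factors
    have castPred_ne : ∀ (k l : Fin (n + 1)) (hk : k ≠ Fin.last n) (hl : l ≠ Fin.last n),
        k ≠ l → k.castPred hk ≠ l.castPred hl := by
      intro k l hk hl hkl hc
      exact hkl (by rw [← Fin.castSucc_castPred k hk, ← Fin.castSucc_castPred l hl, hc])
    have hnewLb : IsBL newL := by
      intro k l hkl i j
      have hkne : k ≠ Fin.last n := Fin.ne_last_of_lt (show k < l from hkl)
      by_cases hl : l = Fin.last n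
      · simp [hnLdef, hkne, hl]
      · have hstep : newL (k, i) (l, j) = L₀ (k.castPred hkne, i) (l.castPred hl, j) := by
          simp [hnLdef, hkne, hl]
        rw [hstep]
        exact hL₀b _ _ hkl i j
    have hnewLu : IsUD newL := by
      intro k i j
      by_cases hk : k = Fin.last n
      · simp [hnLdef, hk]
      · have hstep : newL (k, i) (k, j) = L₀ (k.castPred hk, i) (k.castPred hk, j) := by
          simp [hnLdef, hk]
        rw [hstep, hL₀u]
    have hnewMb : IsBL newM := by
      intro k l hkl i j
      have hkne : k ≠ Fin.last n := Fin.ne_last_of_lt (show k < l from hkl)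
      by_cases hl : l = Fin.last n
      · simp [hnMdef, hkne, hl]
      · have hstep : newM (k, i) (l, j) = M₀ (k.castPred hkne, i) (l.castPred hl, j) := by
          simp [hnMdef, hkne, hl]
        rw [hstep]
        exact hM₀b _ _ hkl i j
    have hnewMu : IsUD newM := by
      intro k i j
      by_cases hk : k = Fin.last n
      · simp [hnMdef, hk]
      · have hstep : newM (k, i) (k, j) = M₀ (k.castPred hk, i) (k.castPred hk, j) := by
          simp [hnMdef, hk]
        rw [hstep, hM₀u]
    have hnewHd : IsBD newH := by
      intro k l hkl i j
      by_cases hk : k = Fin.last n <;> by_cases hl : l = Fin.last n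
      · exact absurd (hk.trans hl.symm) hkl
      · simp [hnHdef, hk, hl]
      · simp [hnHdef, hk, hl]
      · have hstep : newH (k, i) (l, j) = H₀ (k.castPred hk, i) (l.castPred hl, j) := by
          simp [hnHdef, hk, hl]
        rw [hstep]
        exact hH₀d _ _ (castPred_ne k l hk hl hkl) i j
    have hnewHu : ∀ k : Fin (n + 1),
        IsUnit (Matrix.of fun i j : Fin p => newH (k, i) (k, j)) := by
      intro k
      by_cases hk : k = Fin.last n
      · have hstep : (Matrix.of fun i j : Fin p => newH (k, i) (k, j)) = S := by
          ext i j
          simp [hnHdef, hk]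
        rw [hstep]
        exact hSu
      · have hstep : (Matrix.of fun i j : Fin p => newH (k, i) (k, j)) =
            Matrix.of fun i j : Fin p => H₀ (k.castPred hk, i) (k.castPred hk, j) := by
          ext i j
          simp [hnHdef, hk]
        rw [hstep]
        exact hH₀u _
    exact ⟨newL, newM, newH, hnewLb, hnewLu, hnewMb, hnewMu, hnewHd, hnewHu, hGfac⟩

end GaussBorel

/-- Block Gauss–Borel (LU) factorization: if every leading principal block truncation of
the `n`-block matrix `G` (blocks of size `p×p` over `ℂ`) is invertible, then there are
unique block lower unitriangular `S₁, S₂` and a unique block diagonal `H` with invertible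
diagonal blocks such that `G = S₁⁻¹ H (S₂⁻¹)ᵀ`. -/
theorem stmt_12 (n p : ℕ) (G : Matrix (Fin n × Fin p) (Fin n × Fin p) ℂ)
    (hG : ∀ (m : ℕ) (hm : m ≤ n), 0 < m →
      IsUnit (Matrix.of fun a b : Fin m × Fin p =>
        G (Fin.castLE hm a.1, a.2) (Fin.castLE hm b.1, b.2))) :
    ∃! T : Matrix (Fin n × Fin p) (Fin n × Fin p) ℂ ×
        Matrix (Fin n × Fin p) (Fin n × Fin p) ℂ ×
        Matrix (Fin n × Fin p) (Fin n × Fin p) ℂ,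
      (∀ k l : Fin n, (k : ℕ) < (l : ℕ) → ∀ i j : Fin p, T.1 (k, i) (l, j) = 0) ∧
      (∀ (k : Fin n) (i j : Fin p), T.1 (k, i) (k, j) = if i = j then 1 else 0) ∧
      (∀ k l : Fin n, (k : ℕ) < (l : ℕ) → ∀ i j : Fin p, T.2.1 (k, i) (l, j) = 0) ∧
      (∀ (k : Fin n) (i j : Fin p), T.2.1 (k, i) (k, j) = if i = j then 1 else 0) ∧
      (∀ k l : Fin n, k ≠ l → ∀ i j : Fin p, T.2.2 (k, i) (l, j) = 0) ∧
      (∀ k : Fin n, IsUnit (Matrix.of fun i j : Fin p => T.2.2 (k, i) (k, j))) ∧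
      G = T.1⁻¹ * T.2.2 * (T.2.1⁻¹)ᵀ := by
  obtain ⟨L, M, H, hLb, hLu, hMb, hMu, hHd, hHu, hfac⟩ := GaussBorel.exists_lu n G hG
  have hdL : IsUnit L.det := by rw [GaussBorel.det_eq_one hLb hLu]; exact isUnit_one
  have hdM : IsUnit M.det := by rw [GaussBorel.det_eq_one hMb hMu]; exact isUnit_one
  obtain ⟨hLib, hLiu⟩ := GaussBorel.inv_lu hLb hLu
  obtain ⟨hMib, hMiu⟩ := GaussBorel.inv_lu hMb hMu
  have hGL : G = (L⁻¹)⁻¹ * H * ((M⁻¹)⁻¹)ᵀ := by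
    rw [Matrix.nonsing_inv_nonsing_inv L hdL, Matrix.nonsing_inv_nonsing_inv M hdM]
    exact hfac
  refine ⟨(L⁻¹, M⁻¹, H), ⟨hLib, hLiu, hMib, hMiu, hHd, hHu, hGL⟩, ?_⟩
  rintro ⟨T₁, T₂, K⟩ ⟨h1, h2, h3, h4, h5, h6, h7⟩
  obtain ⟨e1, e2, e3⟩ :=
    GaussBorel.uniqueness h1 h2 h3 h4 h5 h6 hLib hLiu hMib hMiu hHd hHu h7 hGL
  exact Prod.ext e1 (Prod.ext e2 e3)
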